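/- With α := (1 - c''/(F'·Ω'))^{-1}, the CDR leakage rate equals α times the emission reduction leakage rate: (1 + (F''·Ω - c'')/(F'·Ω'))^{-1} = α · (1 + (F''·Ω)/(F'·Ω' - c''))^{-1}, given F' > 0, F'' < 0, Ω > 0, Ω' < 0, c'' > 0. -/
import Mathlib

theorem cdr_leakage_eq_alpha_mul_emission_leakage
    (F' F'' Ω Ω' c'' : ℝ)
    (hF' : F' > 0) (hF'' : F'' < 0) (hΩ : Ω > 0) (hΩ' : Ω' < 0) (hc'' : c'' > 0)
    (α : ℝ) (hα : α = (1 - c'' / (F' * Ω'))⁻¹) :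
    (1 + (F'' * Ω - c'') / (F' * Ω'))⁻¹ = α * (1 + (F'' * Ω) / (F' * Ω' - c''))⁻¹ := by
  have h1 : F' * Ω' < 0 := mul_neg_of_pos_of_neg hF' hΩ'
  have h2 : F' * Ω' - c'' < 0 := by linarith
  have h3 : F'' * Ω < 0 := mul_neg_of_neg_of_pos hF'' hΩ
  have h4 : F' * Ω' + (F'' * Ω - c'') < 0 := by linarith
  have h5 : F' * Ω' - c'' + F'' * Ω < 0 := by linarith
  have e1 : (1 + (F'' * Ω - c'') / (F' * Ω')) = (F' * Ω' + (F'' * Ω - c'')) / (F' * Ω') := by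
    rw [add_div, div_self h1.ne]
  have e2 : (1 + (F'' * Ω) / (F' * Ω' - c'')) = (F' * Ω' - c'' + F'' * Ω) / (F' * Ω' - c'') := by
    rw [add_div, div_self h2.ne]
  have e3 : (1 - c'' / (F' * Ω')) = (F' * Ω' - c'') / (F' * Ω') := by
    rw [sub_div, div_self h1.ne]
  rw [hα, e1, e2, e3, inv_div, inv_div, inv_div, div_mul_div_comm]
  rw [div_eq_div_iff h4.ne (mul_ne_zero h2.ne h5.ne)]
  ring
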